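/- Theorem 1 (Motion coordination on paths). Assume the communication graph G is undirected and connected, and that the first and second derivatives of every parametric function f^i_j are bounded on ℝ. Let ξ : [0,∞) → ℝ^{(n+1)N} be any solution of the coupled autonomous system ξ̇^i(t) = χ^i(ξ^i(t), w(t)) for all i ∈ {1,…,N}, where w(t) = (w^1(t),…,w^N(t)) collects the (n+1)-th component of each ξ^i(t). Then for every initial condition ξ(0) (with arbitrarily large initial composite error), the path-following errors satisfy ‖Φ^i(ξ^i(t))‖ → 0 as t → ∞ for every i ∈ {1,…,N}, and Dᵀ(w(t) − w*) → 0 as t → ∞; in particular, w^i(t) − w^j(t) → Δ^{ij} := w*_i − w*_j as t → ∞ for every edge (i,j) of G. -/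

import Mathlib

set_option maxHeartbeats 1000000


open Filter Topology Matrix

section Aux

/-- bounded on `[0,∞)` -/
def BndOn (g : ℝ → ℝ) : Prop := ∃ C : ℝ, ∀ t : ℝ, 0 ≤ t → |g t| ≤ C

lemma BndOn.const (c : ℝ) : BndOn (fun _ => c) := ⟨|c|, fun _ _ => le_rfl⟩

lemma BndOn.add {g1 g2 : ℝ → ℝ} (h1 : BndOn g1) (h2 : BndOn g2) :
    BndOn (fun t => g1 t + g2 t) := by
  obtain ⟨C1, h1⟩ := h1; obtain ⟨C2, h2⟩ := h2
  exact ⟨C1 + C2, fun t ht => (abs_add_le _ _).trans (add_le_add (h1 t ht) (h2 t ht))⟩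

lemma BndOn.mul {g1 g2 : ℝ → ℝ} (h1 : BndOn g1) (h2 : BndOn g2) :
    BndOn (fun t => g1 t * g2 t) := by
  obtain ⟨C1, h1⟩ := h1; obtain ⟨C2, h2⟩ := h2
  refine ⟨|C1| * |C2|, fun t ht => ?_⟩
  rw [abs_mul]
  exact mul_le_mul ((h1 t ht).trans (le_abs_self _)) ((h2 t ht).trans (le_abs_self _))
    (abs_nonneg _) (abs_nonneg _)

lemma BndOn.sum {ι : Type*} (s : Finset ι) (g : ι → ℝ → ℝ) (h : ∀ i ∈ s, BndOn (g i)) :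
    BndOn (fun t => ∑ i ∈ s, g i t) := by
  classical
  induction s using Finset.induction with
  | empty => simpa using BndOn.const 0
  | insert _ _ hx ih =>
    rename_i a s
    simp only [Finset.sum_insert hx]
    exact (h a (Finset.mem_insert_self a s)).add
      (ih fun i hi => h i (Finset.mem_insert_of_mem hi))

lemma BndOn.congr {g1 g2 : ℝ → ℝ} (h1 : BndOn g1) (h : ∀ t, 0 ≤ t → g2 t = g1 t) :
    BndOn g2 := by
  obtain ⟨C, hC⟩ := h1
  exact ⟨C, fun t ht => (h t ht) ▸ hC t ht⟩

/-- monotonicity from nonpositive derivative on an interval -/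
lemma aux_antitone (F F' : ℝ → ℝ) {a b : ℝ} (hab : a ≤ b)
    (hd : ∀ s ∈ Set.Icc a b, HasDerivAt F (F' s) s)
    (hneg : ∀ s ∈ Set.Icc a b, F' s ≤ 0) : F b ≤ F a := by
  have h1 : AntitoneOn F (Set.Icc a b) := by
    apply antitoneOn_of_deriv_nonpos (convex_Icc a b)
    · exact fun s hs => (hd s hs).continuousAt.continuousWithinAt
    · intro s hs
      rw [interior_Icc] at hs
      exact (hd s (Set.mem_Icc_of_Ioo hs)).differentiableAt.differentiableWithinAt
    · intro s hs
      rw [interior_Icc] at hs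
      rw [(hd s (Set.mem_Icc_of_Ioo hs)).deriv]
      exact hneg s (Set.mem_Icc_of_Ioo hs)
  exact h1 (Set.left_mem_Icc.2 hab) (Set.right_mem_Icc.2 hab) hab

/-- Barbalat-style lemma. -/
lemma aux_barbalat (V h H : ℝ → ℝ) (M : ℝ) (hM : 0 < M)
    (hV : ∀ t, 0 ≤ t → HasDerivAt V (-(h t)) t)
    (hh : ∀ t, 0 ≤ t → HasDerivAt h (H t) t)
    (hHM : ∀ t, 0 ≤ t → |H t| ≤ M)
    (hh0 : ∀ t, 0 ≤ t → 0 ≤ h t)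
    (hV0 : ∀ t, 0 ≤ t → 0 ≤ V t) :
    Tendsto h atTop (𝓝 0) := by
  -- V is antitone on [0,∞)
  have hVanti : ∀ a b : ℝ, 0 ≤ a → a ≤ b → V b ≤ V a := by
    intro a b ha hab
    refine aux_antitone V (fun s => -(h s)) hab (fun s hs => hV s (ha.trans hs.1)) ?_
    intro s hs
    simpa using hh0 s (ha.trans hs.1)
  set Vp : ℝ → ℝ := fun t => V (max t 0) with hVp
  have hVpanti : Antitone Vp := by
    intro s t hst
    exact hVanti _ _ (le_max_right s 0) (max_le_max hst le_rfl)
  have hVpbdd : BddBelow (Set.range Vp) := by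
    refine ⟨0, fun v hv => ?_⟩
    obtain ⟨t, rfl⟩ := hv
    exact hV0 _ (le_max_right t 0)
  have hVtend : Tendsto Vp atTop (𝓝 (⨅ i, Vp i)) := tendsto_atTop_ciInf hVpanti hVpbdd
  set Vinf := ⨅ i, Vp i with hVinf
  have hVinfle : ∀ t : ℝ, Vinf ≤ Vp t := fun t => ciInf_le hVpbdd t
  -- key inequality
  have key : ∀ t : ℝ, 0 ≤ t → (h t) ^ 2 ≤ 4 * M * (V t - Vinf) := by
    intro t ht
    set a := h t with ha
    have ha0 : 0 ≤ a := hh0 t ht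
    set δ := a / (2 * M) with hδ
    have hδ0 : 0 ≤ δ := div_nonneg ha0 (by linarith)
    -- on [t, t+δ], h ≥ a/2
    have claim1 : ∀ s ∈ Set.Icc t (t + δ), a / 2 ≤ h s := by
      intro s hs
      have h1 : (fun s => -(h s) - M * s) s ≤ (fun s => -(h s) - M * s) t := by
        apply aux_antitone (fun s => -(h s) - M * s) (fun s => -(H s) - M) hs.1
        · intro r hr
          have := (hh r (ht.trans hr.1)).neg.sub ((hasDerivAt_id r).const_mul M)
          exact this.congr_deriv (by ring)
        · intro r hr
          have := abs_le.1 (hHM r (ht.trans hr.1))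
          linarith [this.1]
      simp only at h1
      have h2 : s - t ≤ δ := by linarith [hs.2]
      have h3 : M * (s - t) ≤ M * δ := by nlinarith [hs.1]
      have h4 : M * δ = a / 2 := by
        rw [hδ]; field_simp
      nlinarith
    -- V decreases by at least a*δ/2
    have claim2 : V (t + δ) + (a / 2) * δ ≤ V t := by
      have h1 : (fun s => V s + (a / 2) * s) (t + δ) ≤ (fun s => V s + (a / 2) * s) t := by
        apply aux_antitone (fun s => V s + (a / 2) * s) (fun s => -(h s) + a / 2) (by linarith)
        · intro r hr
          have := (hV r (ht.trans hr.1)).add ((hasDerivAt_id r).const_mul (a / 2))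
          exact this.congr_deriv (by ring)
        · intro r hr
          linarith [claim1 r hr]
      simp only at h1
      linarith
    have h5 : Vinf ≤ V (t + δ) := by
      have heq : max (t + δ) 0 = t + δ := max_eq_left (by linarith)
      have h := hVinfle (t + δ)
      simp only [hVp] at h
      rwa [heq] at h
    have h6 : (a / 2) * δ ≤ V t - Vinf := by linarith
    have h7 : (a / 2) * δ = a ^ 2 / (4 * M) := by
      rw [hδ]; field_simp; ring
    rw [h7] at h6
    rw [div_le_iff₀ (by linarith)] at h6
    nlinarith
  -- squeeze
  have htendV : Tendsto (fun t => V t - Vinf) atTop (𝓝 0) := by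
    have : Tendsto V atTop (𝓝 Vinf) := by
      apply hVtend.congr'
      filter_upwards [eventually_ge_atTop (0:ℝ)] with t ht
      rw [hVp]; simp [max_eq_left ht]
    simpa using this.sub_const Vinf
  have hsq : Tendsto (fun t => Real.sqrt (4 * M * (V t - Vinf))) atTop (𝓝 0) := by
    have : Tendsto (fun t => 4 * M * (V t - Vinf)) atTop (𝓝 0) := by
      simpa using htendV.const_mul (4 * M)
    have := (Real.continuous_sqrt.tendsto 0).comp this
    simpa [Function.comp_def] using this
  apply squeeze_zero' (g := fun t => Real.sqrt (4 * M * (V t - Vinf)))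
  · filter_upwards [eventually_ge_atTop (0:ℝ)] with t ht using hh0 t ht
  · filter_upwards [eventually_ge_atTop (0:ℝ)] with t ht
    have h1 := key t ht
    have h2 : 0 ≤ 4 * M * (V t - Vinf) := le_trans (sq_nonneg _) h1
    exact (Real.le_sqrt (hh0 t ht) h2).2 h1
  · exact hsq

lemma aux_tendsto_of_sq (g : ℝ → ℝ) (hg : Tendsto (fun t => (g t)^2) atTop (𝓝 0)) :
    Tendsto g atTop (𝓝 0) := by
  have h1 : Tendsto (fun t => Real.sqrt ((g t)^2)) atTop (𝓝 0) := by
    simpa [Function.comp_def] using (Real.continuous_sqrt.tendsto 0).comp hg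
  have h2 : ∀ t, Real.sqrt ((g t)^2) = |g t| := fun t => Real.sqrt_sq_eq_abs _
  simp only [h2] at h1
  exact tendsto_of_tendsto_of_tendsto_of_le_of_le (by simpa using h1.neg) h1
    (fun t => neg_abs_le _) (fun t => le_abs_self _)

lemma aux_tendsto_mul_bounded (g b : ℝ → ℝ) (C : ℝ) (hb : ∀ t, |b t| ≤ C)
    (hg : Tendsto g atTop (𝓝 0)) : Tendsto (fun t => g t * b t) atTop (𝓝 0) := by
  apply aux_tendsto_of_sq
  have hsq : Tendsto (fun t => C^2 * (g t * g t)) atTop (𝓝 0) := by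
    simpa using (hg.mul hg).const_mul (C^2)
  apply squeeze_zero' (Eventually.of_forall fun t => sq_nonneg _)
    (Eventually.of_forall fun t => ?_) hsq
  have hb2 : (b t)^2 ≤ C^2 := by nlinarith [sq_abs (b t), hb t, abs_nonneg (b t)]
  have h3 := mul_le_mul_of_nonneg_left hb2 (mul_self_nonneg (g t))
  nlinarith [h3]
end Aux

/-- **Theorem 1 (Motion coordination on paths).**
Each robot `i ∈ Fin N` has generalized coordinate `ξ^i = (x^i, w^i) ∈ ℝ^{n+1}`,
desired path parameterized by `f i j : ℝ → ℝ`, path-following errors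
`φ^i_j = x^i_j - f^i_j(w^i)`, gains `k i j > 0`, coordination gain `kc > 0`, and the
coupled autonomous system is driven by the coordinating guiding vector field
`χ^i = χ_pf^i + kc · c^i(w) e_{n+1}` with `c(w) = -L(w - w*)`, `L` the Laplacian of the
undirected connected communication graph `G`, and `D` an oriented incidence matrix
with `L = D Dᵀ`.  Then all path-following errors tend to `0` and
`Dᵀ(w(t) - w*) → 0`; in particular `w^i(t) - w^j(t) → w*_i - w*_j` for every edge. -/
theorem motion_coordination_on_paths
    (n N : ℕ) (hn : 1 ≤ n) (hN : 1 ≤ N)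
    (f : Fin N → Fin n → ℝ → ℝ)
    (hf : ∀ i j, ContDiff ℝ 2 (f i j))
    (hbound : ∀ i j, ∃ C : ℝ, ∀ s : ℝ,
      |deriv (f i j) s| ≤ C ∧ |deriv (deriv (f i j)) s| ≤ C)
    (k : Fin N → Fin n → ℝ) (hk : ∀ i j, 0 < k i j)
    (kc : ℝ) (hkc : 0 < kc)
    (G : SimpleGraph (Fin N)) [DecidableRel G.Adj] (hGconn : G.Connected)
    (E : ℕ) (D : Matrix (Fin N) (Fin E) ℝ)
    (hD : G.lapMatrix ℝ = D * D.transpose)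
    (wstar : Fin N → ℝ)
    (x : ℝ → Fin N → Fin n → ℝ) (w : ℝ → Fin N → ℝ)
    -- the first `n` components of the coordinating guiding vector field `χ^i`
    (hode_x : ∀ (i : Fin N) (j : Fin n) (t : ℝ), 0 ≤ t →
      HasDerivAt (fun s => x s i j)
        ((-1 : ℝ) ^ n * deriv (f i j) (w t i)
          - k i j * (x t i j - f i j (w t i))) t)
    -- the `(n+1)`-th component of `χ^i`, including the coordination term `kc · c^i(w)`
    (hode_w : ∀ (i : Fin N) (t : ℝ), 0 ≤ t →
      HasDerivAt (fun s => w s i)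
        ((-1 : ℝ) ^ n
          + (∑ l, k i l * (x t i l - f i l (w t i)) * deriv (f i l) (w t i))
          + kc * (-(G.lapMatrix ℝ *ᵥ (fun m => w t m - wstar m)) i)) t) :
    -- (1) path following: `‖Φ^i(ξ^i(t))‖ → 0` for every robot `i`
    (∀ i : Fin N,
      Tendsto (fun t => Real.sqrt (∑ j, (x t i j - f i j (w t i)) ^ 2))
        atTop (nhds 0)) ∧
    -- (2) coordination: `Dᵀ(w(t) - w*) → 0`
    (∀ e : Fin E,
      Tendsto (fun t => (D.transpose *ᵥ (fun m => w t m - wstar m)) e)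
        atTop (nhds 0)) ∧
    -- in particular `w^i(t) - w^j(t) → Δ^{ij} = w*_i - w*_j` for every edge `(i,j)` of `G`
    (∀ i j : Fin N, G.Adj i j →
      Tendsto (fun t => w t i - w t j) atTop (nhds (wstar i - wstar j))) := by
  classical
  choose Cf hCf using hbound
  -- differentiability of f and deriv f
  have hdf1 : ∀ i j, Differentiable ℝ (f i j) := fun i j =>
    (hf i j).differentiable (by norm_num)
  have hdf2 : ∀ i j, Differentiable ℝ (deriv (f i j)) := by
    intro i j
    have h2 : ContDiff ℝ ((1:WithTop ℕ∞) + 1) (f i j) := by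
      have := hf i j; norm_num at this ⊢; exact this
    exact ((contDiff_succ_iff_deriv.1 h2).2.2).differentiable (by norm_num)
  -- local definitions
  set L : Matrix (Fin N) (Fin N) ℝ := G.lapMatrix ℝ with hL
  set p : Fin N → Fin n → ℝ → ℝ := fun i j t => x t i j - f i j (w t i) with hp
  set df : Fin N → Fin n → ℝ → ℝ := fun i j t => deriv (f i j) (w t i) with hdf
  set ddf : Fin N → Fin n → ℝ → ℝ := fun i j t => deriv (deriv (f i j)) (w t i) with hddf
  set Sf : Fin N → ℝ → ℝ := fun i t => ∑ l, k i l * p i l t * df i l t with hSf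
  set Lw : Fin N → ℝ → ℝ := fun i t => (L *ᵥ fun m => w t m - wstar m) i with hLw
  set yf : Fin N → ℝ → ℝ := fun i t => Sf i t - kc * Lw i t with hyf
  set Wd : Fin N → ℝ → ℝ := fun i t => (-1:ℝ)^n + yf i t with hWd
  set pd : Fin N → Fin n → ℝ → ℝ := fun i j t => -(k i j) * p i j t - df i j t * yf i t with hpd
  set dfd : Fin N → Fin n → ℝ → ℝ := fun i j t => ddf i j t * Wd i t with hdfd
  set Sd : Fin N → ℝ → ℝ :=
    fun i t => ∑ l, k i l * (pd i l t * df i l t + p i l t * dfd i l t) with hSd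
  set Lwd : Fin N → ℝ → ℝ := fun i t => (L *ᵥ fun m => Wd m t) i with hLwd
  set yd : Fin N → ℝ → ℝ := fun i t => Sd i t - kc * Lwd i t with hyd
  set Vf : ℝ → ℝ := fun t => (1/2) * ∑ i, ∑ j, k i j * (p i j t)^2
      + (kc/2) * ∑ i, (w t i - wstar i) * Lw i t with hVf
  set hE : ℝ → ℝ := fun t => (∑ i, ∑ j, (k i j)^2 * (p i j t)^2) + ∑ i, (yf i t)^2 with hhE
  set HE : ℝ → ℝ := fun t => (∑ i, ∑ j, (k i j)^2 * (2 * p i j t * pd i j t))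
      + ∑ i, 2 * yf i t * yd i t with hHE
  -- Laplacian facts
  have hLsymm : ∀ i m, L i m = L m i := by
    intro i m
    have h := SimpleGraph.isSymm_lapMatrix (R := ℝ) G
    exact congrFun (congrFun h m) i
  have hLrow : ∀ i, ∑ m, L i m = 0 := by
    intro i
    have := congrFun (SimpleGraph.lapMatrix_mulVec_const_eq_zero (R := ℝ) G) i
    simpa [Matrix.mulVec, dotProduct] using this
  have hLcol : ∀ m, ∑ i, L i m = 0 := by
    intro m
    rw [Finset.sum_congr rfl fun i _ => hLsymm i m]
    exact hLrow m
  have hsumLv : ∀ v : Fin N → ℝ, ∑ i, (L *ᵥ v) i = 0 := by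
    intro v
    simp only [Matrix.mulVec, dotProduct]
    rw [Finset.sum_comm]
    simp only [← Finset.sum_mul]
    simp [hLcol]
  have hQnonneg : ∀ v : Fin N → ℝ, 0 ≤ v ⬝ᵥ (L *ᵥ v) := by
    intro v
    have := (SimpleGraph.posSemidef_lapMatrix ℝ G).dotProduct_mulVec_nonneg v
    simpa using this
  have hQ_eq : ∀ v : Fin N → ℝ, v ⬝ᵥ (L *ᵥ v) = ∑ e, ((D.transpose *ᵥ v) e)^2 := by
    intro v
    rw [hD, ← Matrix.mulVec_mulVec, Matrix.dotProduct_mulVec, ← Matrix.mulVec_transpose]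
    simp [dotProduct, sq]
  -- derivatives
  have hw' : ∀ i t, 0 ≤ t → HasDerivAt (fun s => w s i) (Wd i t) t := by
    intro i t ht
    have h := hode_w i t ht
    have heq : (-1:ℝ)^n + (∑ l, k i l * (x t i l - f i l (w t i)) * deriv (f i l) (w t i))
        + kc * (-(L *ᵥ fun m => w t m - wstar m) i) = Wd i t := by
      simp only [hWd, hyf, hSf, hLw, hp, hdf, Pi.neg_apply]
      ring
    rwa [heq] at h
  have hpderiv : ∀ i j t, 0 ≤ t → HasDerivAt (p i j) (pd i j t) t := by
    intro i j t ht
    have hx := hode_x i j t ht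
    have hcomp : HasDerivAt (fun s => f i j (w s i)) (deriv (f i j) (w t i) * Wd i t) t :=
      ((hdf1 i j (w t i)).hasDerivAt).comp t (hw' i t ht)
    have h2 := hx.sub hcomp
    have heq : ((-1:ℝ)^n * deriv (f i j) (w t i) - k i j * (x t i j - f i j (w t i)))
        - deriv (f i j) (w t i) * Wd i t = pd i j t := by
      simp only [hpd, hWd, hyf, hp, hdf]
      ring
    rw [heq] at h2
    exact h2
  have hdfderiv : ∀ i j t, 0 ≤ t → HasDerivAt (df i j) (dfd i j t) t := by
    intro i j t ht
    exact ((hdf2 i j (w t i)).hasDerivAt).comp t (hw' i t ht)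
  have hLwderiv : ∀ i t, 0 ≤ t → HasDerivAt (Lw i) (Lwd i t) t := by
    intro i t ht
    have h : HasDerivAt (fun s => ∑ m, L i m * (w s m - wstar m)) (∑ m, L i m * Wd m t) t :=
      HasDerivAt.fun_sum (fun m _ => ((hw' m t ht).sub_const (wstar m)).const_mul (L i m))
    have hfun : Lw i = fun s => ∑ m, L i m * (w s m - wstar m) := by
      funext s; simp [hLw, Matrix.mulVec, dotProduct]
    have hval : Lwd i t = ∑ m, L i m * Wd m t := by
      simp [hLwd, Matrix.mulVec, dotProduct]
    rw [hfun, hval]; exact h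
  have hSderiv : ∀ i t, 0 ≤ t → HasDerivAt (Sf i) (Sd i t) t := by
    intro i t ht
    have h : HasDerivAt (fun s => ∑ l, k i l * (p i l s * df i l s))
        (∑ l, k i l * (pd i l t * df i l t + p i l t * dfd i l t)) t :=
      HasDerivAt.fun_sum fun l _ =>
        (((hpderiv i l t ht).mul (hdfderiv i l t ht)).const_mul (k i l))
    have hfun : Sf i = fun s => ∑ l, k i l * (p i l s * df i l s) := by
      funext s; simp only [hSf]; exact Finset.sum_congr rfl fun l _ => by ring
    rw [hfun]; exact h
  have hyderiv : ∀ i t, 0 ≤ t → HasDerivAt (yf i) (yd i t) t := by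
    intro i t ht
    exact (hSderiv i t ht).sub ((hLwderiv i t ht).const_mul kc)
  have hpsq : ∀ i j t, 0 ≤ t → HasDerivAt (fun s => (p i j s)^2) (2 * p i j t * pd i j t) t := by
    intro i j t ht
    have h := (hpderiv i j t ht).fun_pow 2
    refine h.congr_deriv ?_
    push_cast
    ring
  have hysq : ∀ i t, 0 ≤ t → HasDerivAt (fun s => (yf i s)^2) (2 * yf i t * yd i t) t := by
    intro i t ht
    have h := (hyderiv i t ht).fun_pow 2
    refine h.congr_deriv ?_
    push_cast
    ring
  -- derivative of V is -(hE)
  have hVderiv : ∀ t, 0 ≤ t → HasDerivAt Vf (-(hE t)) t := by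
    intro t ht
    have hA : HasDerivAt (fun s => ∑ i, ∑ j, k i j * (p i j s)^2)
        (∑ i, ∑ j, k i j * (2 * p i j t * pd i j t)) t :=
      HasDerivAt.fun_sum fun i _ => HasDerivAt.fun_sum fun j _ =>
        ((hpsq i j t ht).const_mul (k i j))
    have hB : HasDerivAt (fun s => ∑ i, (w s i - wstar i) * Lw i s)
        (∑ i, (Wd i t * Lw i t + (w t i - wstar i) * Lwd i t)) t :=
      HasDerivAt.fun_sum fun i _ => ((hw' i t ht).sub_const (wstar i)).mul (hLwderiv i t ht)
    have hraw := (hA.const_mul ((1:ℝ)/2)).add (hB.const_mul (kc/2))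
    have e1 : ∑ i, (w t i - wstar i) * Lwd i t = ∑ i, Wd i t * Lw i t := by
      calc ∑ i, (w t i - wstar i) * Lwd i t
          = ∑ i, ∑ m, (w t i - wstar i) * (L i m * Wd m t) := by
            apply Finset.sum_congr rfl; intro i _
            simp only [hLwd, Matrix.mulVec, dotProduct]
            rw [Finset.mul_sum]
        _ = ∑ m, ∑ i, (w t i - wstar i) * (L i m * Wd m t) := Finset.sum_comm
        _ = ∑ m, Wd m t * Lw m t := by
            apply Finset.sum_congr rfl; intro m _
            simp only [hLw, Matrix.mulVec, dotProduct]
            rw [Finset.mul_sum]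
            apply Finset.sum_congr rfl; intro i _
            rw [hLsymm i m]
            ring
    have e2 : ∑ i, Lw i t = 0 := by
      simpa only [hLw] using hsumLv (fun m => w t m - wstar m)
    have e3 : ∑ i, (Wd i t * Lw i t + (w t i - wstar i) * Lwd i t)
        = 2 * ∑ i, Wd i t * Lw i t := by
      rw [Finset.sum_add_distrib, e1]; ring
    have e4 : ∑ i, Wd i t * Lw i t = ∑ i, yf i t * Lw i t := by
      have h1 : ∀ i ∈ Finset.univ, Wd i t * Lw i t
          = (-1:ℝ)^n * Lw i t + yf i t * Lw i t := fun i _ => by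
        simp only [hWd]; ring
      rw [Finset.sum_congr rfl h1, Finset.sum_add_distrib, ← Finset.mul_sum, e2]
      ring
    have e5 : ∀ i, ∑ j, k i j * (2 * p i j t * pd i j t)
        = -(2:ℝ)*(∑ j, (k i j)^2 * (p i j t)^2) - 2*((∑ j, k i j * p i j t * df i j t) * yf i t) := by
      intro i
      have h1 : ∀ j ∈ Finset.univ, k i j * (2 * p i j t * pd i j t)
          = -(2:ℝ)*((k i j)^2 * (p i j t)^2) - 2*((k i j * p i j t * df i j t) * yf i t) := by
        intro j _; simp only [hpd]; ring
      rw [Finset.sum_congr rfl h1, Finset.sum_sub_distrib, ← Finset.mul_sum,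
        ← Finset.mul_sum, ← Finset.sum_mul]
    have heq : (1:ℝ)/2 * (∑ i, ∑ j, k i j * (2 * p i j t * pd i j t))
        + kc/2 * (∑ i, (Wd i t * Lw i t + (w t i - wstar i) * Lwd i t)) = -(hE t) := by
      rw [e3, e4, Finset.sum_congr rfl (fun i _ => e5 i)]
      simp only [hhE]
      rw [Finset.sum_sub_distrib, ← Finset.mul_sum, ← Finset.mul_sum]
      have e6 : ∑ i, (∑ j, k i j * p i j t * df i j t) * yf i t = ∑ i, Sf i t * yf i t := by
        apply Finset.sum_congr rfl; intro i _; simp only [hSf]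
      rw [e6]
      have e7 : ∑ i, (yf i t)^2 = ∑ i, Sf i t * yf i t - kc * ∑ i, yf i t * Lw i t := by
        rw [Finset.mul_sum, ← Finset.sum_sub_distrib]
        apply Finset.sum_congr rfl; intro i _
        simp only [hyf]; ring
      rw [e7]
      ring
    exact heq ▸ hraw
  -- derivative of hE
  have hhEderiv : ∀ t, 0 ≤ t → HasDerivAt hE (HE t) t := by
    intro t ht
    have h1 : HasDerivAt (fun s => ∑ i, ∑ j, (k i j)^2 * (p i j s)^2)
        (∑ i, ∑ j, (k i j)^2 * (2 * p i j t * pd i j t)) t :=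
      HasDerivAt.fun_sum fun i _ => HasDerivAt.fun_sum fun j _ =>
        ((hpsq i j t ht).const_mul ((k i j)^2))
    have h2 : HasDerivAt (fun s => ∑ i, (yf i s)^2) (∑ i, 2 * yf i t * yd i t) t :=
      HasDerivAt.fun_sum fun i _ => hysq i t ht
    exact h1.add h2
  clear_value L p df ddf Sf Lw yf Wd pd dfd Sd Lwd yd Vf hE HE
  -- nonnegativity
  have hEnonneg : ∀ t, 0 ≤ hE t := by
    intro t
    simp only [hhE]
    apply add_nonneg
    · exact Finset.sum_nonneg fun i _ => Finset.sum_nonneg fun j _ =>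
        mul_nonneg (sq_nonneg _) (sq_nonneg _)
    · exact Finset.sum_nonneg fun i _ => sq_nonneg _
  have hPFnonneg : ∀ t, 0 ≤ ∑ i, ∑ j, k i j * (p i j t)^2 := fun t =>
    Finset.sum_nonneg fun i _ => Finset.sum_nonneg fun j _ =>
      mul_nonneg (hk i j).le (sq_nonneg _)
  have hQt : ∀ t, (∑ i, (w t i - wstar i) * Lw i t)
      = (fun m => w t m - wstar m) ⬝ᵥ (L *ᵥ fun m => w t m - wstar m) := by
    intro t; simp [hLw, dotProduct]
  have hQtnonneg : ∀ t, 0 ≤ ∑ i, (w t i - wstar i) * Lw i t := fun t =>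
    (hQt t) ▸ hQnonneg _
  have hVnonneg : ∀ t, 0 ≤ Vf t := by
    intro t; simp only [hVf]
    have h1 := hPFnonneg t
    have h2 := hQtnonneg t
    have h3 := hkc.le
    positivity
  have hVmono : ∀ t, 0 ≤ t → Vf t ≤ Vf 0 := by
    intro t ht
    exact aux_antitone Vf (fun s => -(hE s)) ht (fun s hs => hVderiv s hs.1)
      (fun s hs => neg_nonpos.2 (hEnonneg s))
  -- bounds
  have hphibound : ∀ i j t, 0 ≤ t → (p i j t)^2 ≤ 2 * Vf 0 / k i j := by
    intro i j t ht
    have h2 : k i j * (p i j t)^2 ≤ ∑ j', k i j' * (p i j' t)^2 :=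
      Finset.single_le_sum (f := fun j' => k i j' * (p i j' t)^2)
        (fun j' _ => mul_nonneg (hk i j').le (sq_nonneg _)) (Finset.mem_univ j)
    have h1 : k i j * (p i j t)^2 ≤ ∑ i', ∑ j', k i' j' * (p i' j' t)^2 :=
      h2.trans (Finset.single_le_sum (f := fun i' => ∑ j', k i' j' * (p i' j' t)^2)
        (fun i' _ => Finset.sum_nonneg fun j' _ => mul_nonneg (hk i' j').le (sq_nonneg _))
        (Finset.mem_univ i))
    have h3 : (1:ℝ)/2 * ∑ i', ∑ j', k i' j' * (p i' j' t)^2 ≤ Vf t := by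
      simp only [hVf]
      nlinarith [hQtnonneg t, hkc.le]
    have h4 := h3.trans (hVmono t ht)
    rw [le_div_iff₀ (hk i j)]
    have h5 : k i j * (p i j t)^2 ≤ 2 * Vf 0 := le_trans h1 (by linarith only [h4])
    linarith only [h5]
  have hBndp : ∀ i j, BndOn (p i j) := by
    intro i j
    refine ⟨Real.sqrt (2 * Vf 0 / k i j), fun t ht => ?_⟩
    rw [← Real.sqrt_sq_eq_abs]
    exact Real.sqrt_le_sqrt (hphibound i j t ht)
  have hQbound : ∀ t, 0 ≤ t → ∑ i, (w t i - wstar i) * Lw i t ≤ 2 * Vf 0 / kc := by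
    intro t ht
    have h3 : kc/2 * (∑ i, (w t i - wstar i) * Lw i t) ≤ Vf t := by
      simp only [hVf]
      nlinarith [hPFnonneg t]
    have h4 := h3.trans (hVmono t ht)
    rw [le_div_iff₀ hkc]
    linarith only [h4]
  have hLwval : ∀ i t, Lw i t
      = ∑ e, D i e * ((D.transpose *ᵥ fun m => w t m - wstar m) e) := by
    intro i t
    simp only [hLw]
    rw [hD, ← Matrix.mulVec_mulVec]
    simp [Matrix.mulVec, dotProduct]
  have hqe : ∀ t, ∑ e, ((D.transpose *ᵥ fun m => w t m - wstar m) e)^2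
      = ∑ i', (w t i' - wstar i') * Lw i' t :=
    fun t => ((hQ_eq _).symm).trans (hQt t).symm
  have hBndLw : ∀ i, BndOn (Lw i) := by
    intro i
    refine ⟨Real.sqrt ((∑ e, (D i e)^2) * (2 * Vf 0 / kc)), fun t ht => ?_⟩
    have hcs : (Lw i t)^2 ≤ (∑ e, (D i e)^2)
        * (∑ e, ((D.transpose *ᵥ fun m => w t m - wstar m) e)^2) := by
      rw [hLwval]
      exact Finset.sum_mul_sq_le_sq_mul_sq _ _ _
    have h5 : (Lw i t)^2 ≤ (∑ e, (D i e)^2) * (2 * Vf 0 / kc) := by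
      refine hcs.trans (mul_le_mul_of_nonneg_left ?_ ?_)
      · rw [hqe]; exact hQbound t ht
      · exact Finset.sum_nonneg fun e _ => sq_nonneg _
    rw [← Real.sqrt_sq_eq_abs]
    exact Real.sqrt_le_sqrt h5
  have hBnddf : ∀ i j, BndOn (df i j) := fun i j =>
    ⟨Cf i j, fun t ht => by rw [hdf]; exact (hCf i j (w t i)).1⟩
  have hBndddf : ∀ i j, BndOn (ddf i j) := fun i j =>
    ⟨Cf i j, fun t ht => by rw [hddf]; exact (hCf i j (w t i)).2⟩
  have hBndS : ∀ i, BndOn (Sf i) := fun i =>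
    (BndOn.sum Finset.univ (fun l t => k i l * p i l t * df i l t)
      (fun l _ => ((BndOn.const (k i l)).mul (hBndp i l)).mul (hBnddf i l))).congr
      (fun t ht => by rw [hSf])
  have hBndy : ∀ i, BndOn (yf i) := by
    intro i
    refine ((hBndS i).add ((BndOn.const (-kc)).mul (hBndLw i))).congr fun t ht => ?_
    simp only [hyf]; ring
  have hBndWd : ∀ i, BndOn (Wd i) := fun i =>
    ((BndOn.const ((-1:ℝ)^n)).add (hBndy i)).congr (fun t ht => by rw [hWd])
  have hBndpd : ∀ i j, BndOn (pd i j) := by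
    intro i j
    refine (((BndOn.const (-(k i j))).mul (hBndp i j)).add
      (((BndOn.const (-1)).mul (hBnddf i j)).mul (hBndy i))).congr fun t ht => ?_
    simp only [hpd]; ring
  have hBnddfd : ∀ i j, BndOn (dfd i j) := fun i j =>
    ((hBndddf i j).mul (hBndWd i)).congr (fun t ht => by rw [hdfd])
  have hBndSd : ∀ i, BndOn (Sd i) := fun i =>
    (BndOn.sum Finset.univ
      (fun l t => k i l * (pd i l t * df i l t + p i l t * dfd i l t))
      (fun l _ => (BndOn.const (k i l)).mul
      (((hBndpd i l).mul (hBnddf i l)).add ((hBndp i l).mul (hBnddfd i l))))).congr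
      (fun t ht => by rw [hSd])
  have hBndLwd : ∀ i, BndOn (Lwd i) := by
    intro i
    refine (BndOn.sum Finset.univ (fun m t => L i m * Wd m t)
      (fun m _ => (BndOn.const (L i m)).mul (hBndWd m))).congr fun t ht => ?_
    simp [hLwd, Matrix.mulVec, dotProduct]
  have hBndyd : ∀ i, BndOn (yd i) := by
    intro i
    refine ((hBndSd i).add ((BndOn.const (-kc)).mul (hBndLwd i))).congr fun t ht => ?_
    simp only [hyd]; ring
  have hBndHE : BndOn HE := by
    refine ((BndOn.sum Finset.univ (fun i t => ∑ j, (k i j)^2 * (2 * p i j t * pd i j t))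
        (fun i _ => BndOn.sum Finset.univ _ (fun j _ => (BndOn.const ((k i j)^2)).mul
          (((BndOn.const 2).mul (hBndp i j)).mul (hBndpd i j))))).add
      (BndOn.sum Finset.univ (fun i t => 2 * yf i t * yd i t)
        (fun i _ => ((BndOn.const 2).mul (hBndy i)).mul (hBndyd i)))).congr fun t ht => ?_
    simp only [hHE]
  -- Barbalat
  obtain ⟨M₀, hM₀⟩ := hBndHE
  have hM : (0:ℝ) < |M₀| + 1 := by positivity
  have htendhE : Tendsto hE atTop (𝓝 0) :=
    aux_barbalat Vf hE HE (|M₀| + 1) hM hVderiv hhEderiv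
      (fun t ht => (hM₀ t ht).trans (by
        have := le_abs_self M₀; linarith))
      (fun t _ => hEnonneg t) (fun t _ => hVnonneg t)
  -- componentwise limits
  have hp2tend : ∀ i j, Tendsto (fun t => (p i j t)^2) atTop (𝓝 0) := by
    intro i j
    have hg : Tendsto (fun t => hE t / (k i j)^2) atTop (𝓝 0) := by
      simpa using htendhE.div_const ((k i j)^2)
    apply squeeze_zero' (Eventually.of_forall fun t => sq_nonneg _)
      (Eventually.of_forall fun t => ?_) hg
    have h1 : (k i j)^2 * (p i j t)^2 ≤ hE t := by
      simp only [hhE]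
      have h2 : (k i j)^2*(p i j t)^2 ≤ ∑ j', (k i j')^2 * (p i j' t)^2 :=
        Finset.single_le_sum (f := fun j' => (k i j')^2 * (p i j' t)^2)
          (fun j' _ => mul_nonneg (sq_nonneg _) (sq_nonneg _)) (Finset.mem_univ j)
      have h3 : (∑ j', (k i j')^2 * (p i j' t)^2)
          ≤ ∑ i', ∑ j', (k i' j')^2 * (p i' j' t)^2 :=
        Finset.single_le_sum (f := fun i' => ∑ j', (k i' j')^2 * (p i' j' t)^2)
          (fun i' _ => Finset.sum_nonneg fun j' _ => mul_nonneg (sq_nonneg _) (sq_nonneg _))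
          (Finset.mem_univ i)
      have h4 : (0:ℝ) ≤ ∑ i', (yf i' t)^2 := Finset.sum_nonneg fun i' _ => sq_nonneg _
      linarith
    rw [le_div_iff₀ (pow_pos (hk i j) 2)]
    linarith [h1]
  have hptend : ∀ i j, Tendsto (p i j) atTop (𝓝 0) := fun i j =>
    aux_tendsto_of_sq _ (hp2tend i j)
  have hy2tend : ∀ i, Tendsto (fun t => (yf i t)^2) atTop (𝓝 0) := by
    intro i
    apply squeeze_zero' (Eventually.of_forall fun t => sq_nonneg _)
      (Eventually.of_forall fun t => ?_) htendhE
    simp only [hhE]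
    have h4 : (yf i t)^2 ≤ ∑ i', (yf i' t)^2 :=
      Finset.single_le_sum (f := fun i' => (yf i' t)^2)
        (fun i' _ => sq_nonneg _) (Finset.mem_univ i)
    have h5 : (0:ℝ) ≤ ∑ i', ∑ j', (k i' j')^2 * (p i' j' t)^2 :=
      Finset.sum_nonneg fun i' _ => Finset.sum_nonneg fun j' _ =>
        mul_nonneg (sq_nonneg _) (sq_nonneg _)
    linarith
  have hytend : ∀ i, Tendsto (yf i) atTop (𝓝 0) := fun i =>
    aux_tendsto_of_sq _ (hy2tend i)
  have hStend : ∀ i, Tendsto (Sf i) atTop (𝓝 0) := by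
    intro i
    have h1 : Tendsto (fun t => ∑ l, k i l * p i l t * df i l t) atTop (𝓝 0) := by
      have h2 := tendsto_finset_sum (Finset.univ (α := Fin n)) (fun l _ =>
        aux_tendsto_mul_bounded (fun t => k i l * p i l t) (df i l) (Cf i l)
          (fun t => by rw [hdf]; exact (hCf i l (w t i)).1)
          (by simpa using (hptend i l).const_mul (k i l)))
      simpa using h2
    exact h1.congr (fun t => by simp only [hSf])
  have hLwtend : ∀ i, Tendsto (Lw i) atTop (𝓝 0) := by
    intro i
    have h1 : Tendsto (fun t => (Sf i t - yf i t) / kc) atTop (𝓝 0) := by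
      simpa using ((hStend i).sub (hytend i)).div_const kc
    apply h1.congr
    intro t
    simp only [hyf]
    field_simp
    ring
  -- the averaging matrix
  set J : Matrix (Fin N) (Fin N) ℝ := Matrix.of (fun _ _ => (1:ℝ)) with hJ
  set Mm : Matrix (Fin N) (Fin N) ℝ := L + (N:ℝ)⁻¹ • J with hMm
  have hNpos : (0:ℝ) < N := by
    have : 0 < N := by omega
    exact_mod_cast this
  have hdet : Mm.det ≠ 0 := by
    intro hdet0
    obtain ⟨v, hv0, hveq⟩ := Matrix.exists_mulVec_eq_zero_iff.2 hdet0
    have hJquad : v ⬝ᵥ (J *ᵥ v) = (∑ m, v m)^2 := by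
      simp only [hJ, Matrix.mulVec, dotProduct, Matrix.of_apply, one_mul, sq]
      rw [← Finset.sum_mul]
    have h1 : v ⬝ᵥ (Mm *ᵥ v) = v ⬝ᵥ (L *ᵥ v) + (N:ℝ)⁻¹ * (∑ m, v m)^2 := by
      rw [hMm, Matrix.add_mulVec, dotProduct_add, Matrix.smul_mulVec,
        dotProduct_smul, smul_eq_mul, hJquad]
    rw [hveq, dotProduct_zero] at h1
    have h2 := hQnonneg v
    have h3 : (0:ℝ) ≤ (N:ℝ)⁻¹ * (∑ m, v m)^2 := by positivity
    have h4 : v ⬝ᵥ (L *ᵥ v) = 0 := by linarith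
    have h5 : (∑ m, v m) = 0 := by
      have h6 : (N:ℝ)⁻¹ * (∑ m, v m)^2 = 0 := by linarith
      have hNne : (N:ℝ)⁻¹ ≠ 0 := by positivity
      have h7 : (∑ m, v m)^2 = 0 := by
        rcases mul_eq_zero.1 h6 with h | h
        · exact absurd h hNne
        · exact h
      exact pow_eq_zero_iff (by norm_num) |>.1 h7
    have h6 : ∀ a b : Fin N, v a = v b := by
      have h7 : Matrix.toLinearMap₂' ℝ (G.lapMatrix ℝ) v v = 0 := by
        rw [Matrix.toLinearMap₂'_apply', ← hL]
        exact h4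
      have h8 := (SimpleGraph.lapMatrix_toLinearMap₂'_apply'_eq_zero_iff_forall_reachable
        G v).1 h7
      exact fun a b => h8 a b (hGconn.preconnected a b)
    apply hv0
    funext a
    have h9 : ∑ m, v m = (N:ℝ) * v a := by
      rw [Finset.sum_congr rfl (fun m _ => h6 m a)]
      simp [Finset.card_univ]
    have h10 : (N:ℝ) * v a = 0 := by rw [← h9]; exact h5
    have h11 := mul_eq_zero.1 h10
    rcases h11 with h | h
    · exact absurd h (by positivity)
    · exact h
  have hMinv : Mm⁻¹ * Mm = 1 := Matrix.nonsing_inv_mul Mm (isUnit_iff_ne_zero.2 hdet)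
  set u : ℝ → Fin N → ℝ :=
    fun t => Mm⁻¹ *ᵥ (L *ᵥ (fun m => w t m - wstar m)) with hu
  have hu_eq : ∀ t i, u t i = (w t i - wstar i) - (∑ m, (w t m - wstar m)) / N := by
    intro t i0
    have hMu : Mm *ᵥ (fun m => (w t m - wstar m) - (∑ m', (w t m' - wstar m')) / N)
        = L *ᵥ (fun m => w t m - wstar m) := by
      funext a
      rw [hMm, Matrix.add_mulVec, Matrix.smul_mulVec]
      have hLpart : (L *ᵥ fun m => (w t m - wstar m) - (∑ m', (w t m' - wstar m')) / N) a
          = (L *ᵥ fun m => w t m - wstar m) a := by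
        simp only [Matrix.mulVec, dotProduct, mul_sub]
        rw [Finset.sum_sub_distrib, ← Finset.sum_mul, hLrow a]
        ring
      have hJpart : (J *ᵥ fun m => (w t m - wstar m) - (∑ m', (w t m' - wstar m')) / N) a
          = 0 := by
        simp only [hJ, Matrix.mulVec, dotProduct, Matrix.of_apply, one_mul]
        rw [Finset.sum_sub_distrib]
        simp [Finset.card_univ]
        field_simp
        ring
      simp only [Pi.add_apply, Pi.smul_apply, hLpart, hJpart, smul_eq_mul, mul_zero, add_zero]
    have huT : u t = fun m => (w t m - wstar m) - (∑ m', (w t m' - wstar m')) / N := by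
      simp only [hu]
      rw [← hMu, Matrix.mulVec_mulVec, hMinv, Matrix.one_mulVec]
    exact congrFun huT i0
  have hutend : ∀ a, Tendsto (fun t => u t a) atTop (𝓝 0) := by
    intro a
    have h1 : ∀ t, u t a = ∑ m, Mm⁻¹ a m * Lw m t := by
      intro t
      rw [hu]
      simp only [Matrix.mulVec, dotProduct, hLw]
    have h2 : Tendsto (fun t => ∑ m, Mm⁻¹ a m * Lw m t) atTop (𝓝 0) := by
      have h3 := tendsto_finset_sum (Finset.univ (α := Fin N)) (fun m _ =>
        by simpa using (hLwtend m).const_mul (Mm⁻¹ a m))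
      simpa using h3
    exact h2.congr (fun t => (h1 t).symm)
  have hQtend : Tendsto (fun t => ∑ i, (w t i - wstar i) * Lw i t) atTop (𝓝 0) := by
    have h1 : ∀ t, ∑ i, (w t i - wstar i) * Lw i t = ∑ i, u t i * Lw i t
        + ((∑ m, (w t m - wstar m))/N) * ∑ i, Lw i t := by
      intro t
      rw [Finset.mul_sum, ← Finset.sum_add_distrib]
      apply Finset.sum_congr rfl
      intro i _
      rw [hu_eq]
      ring
    have h2 : Tendsto (fun t => ∑ i, u t i * Lw i t) atTop (𝓝 0) := by
      have h3 := tendsto_finset_sum (Finset.univ (α := Fin N)) (fun i _ =>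
        by simpa using (hutend i).mul (hLwtend i))
      simpa using h3
    apply h2.congr
    intro t
    rw [h1 t]
    have e2 : ∑ i, Lw i t = 0 := by
      simpa only [hLw] using hsumLv (fun m => w t m - wstar m)
    rw [e2]
    ring
  refine ⟨?_, ?_, ?_⟩
  · intro i
    have hsum : Tendsto (fun t => ∑ j, (p i j t)^2) atTop (𝓝 0) := by
      have := tendsto_finset_sum (Finset.univ (α := Fin n)) (fun j _ => hp2tend i j)
      simpa using this
    have h2 : Tendsto (fun t => Real.sqrt (∑ j, (p i j t)^2)) atTop (𝓝 0) := by
      simpa [Function.comp_def] using (Real.continuous_sqrt.tendsto 0).comp hsum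
    apply h2.congr
    intro t
    congr 1
    exact Finset.sum_congr rfl fun j _ => by simp only [hp]
  · intro e
    apply aux_tendsto_of_sq
    have h1 : ∀ t, ((D.transpose *ᵥ fun m => w t m - wstar m) e)^2
        ≤ ∑ i, (w t i - wstar i) * Lw i t := by
      intro t
      rw [← hqe t]
      exact Finset.single_le_sum
        (f := fun e' => ((D.transpose *ᵥ fun m => w t m - wstar m) e')^2)
        (fun e' _ => sq_nonneg _) (Finset.mem_univ e)
    exact squeeze_zero' (Eventually.of_forall fun t => sq_nonneg _)
      (Eventually.of_forall h1) hQtend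
  · intro a b hadj
    have h1 : (fun t => w t a - w t b) = fun t => (u t a - u t b) + (wstar a - wstar b) := by
      funext t
      rw [hu_eq, hu_eq]
      ring
    rw [h1]
    have h2 : Tendsto (fun t => u t a - u t b) atTop (𝓝 0) := by
      simpa using (hutend a).sub (hutend b)
    simpa using h2.add_const (wstar a - wstar b)
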